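/- Let b₁ > 0 and b₂, …, b_n ≥ 0 be real numbers, and p ∈ (0,1). Then ∑_{k=1}^n b_k / (∑_{i=1}^k b_i)^p ≤ (1/(1-p)) (∑_{k=1}^n b_k)^{1-p}. -/

import Mathlib

open Real

lemma key_step (p : ℝ) (hp : p ∈ Set.Ioo (0:ℝ) 1) {a s : ℝ} (ha : 0 ≤ a) (has : a ≤ s)
    (hs : 0 < s) : (s - a) / s ^ p ≤ (s ^ (1 - p) - a ^ (1 - p)) / (1 - p) := by
  obtain ⟨hp0, hp1⟩ := hp
  have hq0 : (0:ℝ) < 1 - p := by linarith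
  have hber := rpow_one_add_le_one_add_mul_self (s := a / s - 1) (p := 1 - p)
    (by have h0 : (0:ℝ) ≤ a / s := by positivity
        linarith) (le_of_lt hq0) (by linarith)
  have h1 : (1 : ℝ) + (a / s - 1) = a / s := by ring
  rw [h1] at hber
  have hdiv : (a / s) ^ (1 - p) = a ^ (1 - p) / s ^ (1 - p) :=
    Real.div_rpow ha hs.le _
  rw [hdiv] at hber
  have hspow : (0:ℝ) < s ^ (1 - p) := Real.rpow_pos_of_pos hs _
  have h2 : a ^ (1 - p) ≤ (1 + (1 - p) * (a / s - 1)) * s ^ (1 - p) := by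
    rw [div_le_iff₀ hspow] at hber; linarith
  have h3 : (1 + (1 - p) * (a / s - 1)) * s ^ (1 - p)
      = s ^ (1 - p) - (1 - p) * ((s - a) / s * s ^ (1 - p)) := by
    field_simp; ring
  rw [h3] at h2
  have hss : s ^ (1 - p) = s / s ^ p := by
    rw [Real.rpow_sub hs, Real.rpow_one]
  have h4 : (s - a) / s * s ^ (1 - p) = (s - a) / s ^ p := by
    rw [hss]
    have hsp : (0:ℝ) < s ^ p := Real.rpow_pos_of_pos hs p
    field_simp
  rw [h4] at h2
  rw [le_div_iff₀ hq0]
  linarith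

/-- Lemma 3 of Levy et al.: weighted sum bound for partial sums. -/
theorem sum_div_pow_partial_sum_le (n : ℕ) (hn : 1 ≤ n) (b : ℕ → ℝ)
    (hb1 : 0 < b 1) (hb : ∀ k, 2 ≤ k → 0 ≤ b k) (p : ℝ) (hp : p ∈ Set.Ioo (0 : ℝ) 1) :
    ∑ k ∈ Finset.Icc 1 n, b k / (∑ i ∈ Finset.Icc 1 k, b i) ^ p ≤
      (1 / (1 - p)) * (∑ k ∈ Finset.Icc 1 n, b k) ^ (1 - p) := by
  have hp0 := hp.1
  have hp1 := hp.2
  have hq0 : (0:ℝ) < 1 - p := by linarith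
  have hbk : ∀ k : ℕ, 1 ≤ k → 0 ≤ b k := by
    intro k hk
    rcases eq_or_lt_of_le hk with h | h
    · rw [← h]; exact hb1.le
    · exact hb k h
  have hSpos : ∀ m : ℕ, 1 ≤ m → 0 < ∑ i ∈ Finset.Icc 1 m, b i := by
    intro m hm
    apply Finset.sum_pos'
    · intro i hi; exact hbk i (Finset.mem_Icc.mp hi).1
    · exact ⟨1, Finset.mem_Icc.mpr ⟨le_refl 1, hm⟩, hb1⟩
  induction n, hn using Nat.le_induction with
  | base =>
    simp only [Finset.Icc_self, Finset.sum_singleton]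
    rw [div_le_iff₀ (Real.rpow_pos_of_pos hb1 p)]
    have hmul : b 1 ^ (1-p) * b 1 ^ p = b 1 := by
      rw [← Real.rpow_add hb1]; norm_num
    have hge : (1:ℝ) ≤ 1/(1-p) := by rw [le_div_iff₀ hq0]; linarith
    nlinarith [hmul, hge, hb1]
  | succ n hn ih =>
    rw [Finset.sum_Icc_succ_top (by omega), Finset.sum_Icc_succ_top (by omega : 1 ≤ n + 1)]
    set S := ∑ i ∈ Finset.Icc 1 n, b i with hS
    have hSp : 0 < S := hSpos n hn
    have hS'p : 0 < S + b (n+1) := by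
      have := hbk (n+1) (by omega); linarith
    have hkey := key_step p hp (a := S) (s := S + b (n+1)) hSp.le (by
      have := hbk (n+1) (by omega); linarith) hS'p
    have h5 : (S + b (n+1)) - S = b (n+1) := by ring
    rw [h5] at hkey
    have := ih
    calc (∑ k ∈ Finset.Icc 1 n, b k / (∑ i ∈ Finset.Icc 1 k, b i) ^ p)
          + b (n+1) / (S + b (n+1)) ^ p
        ≤ (1/(1-p)) * S ^ (1-p) + ((S + b (n+1)) ^ (1-p) - S ^ (1-p)) / (1-p) := by
          exact add_le_add ih hkey
      _ = (1/(1-p)) * (S + b (n+1)) ^ (1-p) := by field_simp; ring
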